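/- Let P, Q ⊆ ℝ^n be polyhedral cones and let (u,v) be a critical pair of MA(P,Q). Let F_u and F_v be the faces of P and Q of least dimension containing u and v respectively. If dim(F_u) + dim(F_v) > n and v ≠ u and v ≠ −u, then (u,v) is a saddle point of MA(P,Q), i.e. (u,v) is neither a local minimizer nor a local maximizer of (u,v) ↦ ⟨u,v⟩ on the feasible set {(u,v) : u ∈ P, v ∈ Q, ‖u‖ = ‖v‖ = 1}. -/

import Mathlib

open Matrix

/-- Euclidean norm of a vector in `ℝ^n`. -/
noncomputable def vnorm {n : ℕ} (v : Fin n → ℝ) : ℝ := Real.sqrt (v ⬝ᵥ v)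

/-- The polyhedral cone generated by the columns of `G`. -/
def coneOf {m p : ℕ} (G : Matrix (Fin m) (Fin p) ℝ) : Set (Fin m → ℝ) :=
  {u | ∃ x : Fin p → ℝ, (∀ i, 0 ≤ x i) ∧ u = G.mulVec x}

/-- `F` is a face of the cone `P`: a subcone `F ⊆ P` such that whenever a sum of two
elements of `P` lies in `F`, both summands lie in `F`. -/
def IsFace {d : ℕ} (P F : Set (Fin d → ℝ)) : Prop :=
  F ⊆ P ∧ Convex ℝ F ∧ (∀ c : ℝ, 0 ≤ c → ∀ x ∈ F, c • x ∈ F) ∧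
    ∀ v₁ v₂, v₁ ∈ P → v₂ ∈ P → v₁ + v₂ ∈ F → v₁ ∈ F ∧ v₂ ∈ F

/-- The dimension of a face: the dimension of its linear span. -/
noncomputable def faceDim {d : ℕ} (F : Set (Fin d → ℝ)) : ℕ :=
  Module.finrank ℝ ↥(Submodule.span ℝ F)

section Aux
variable {n : ℕ}

lemma dot_self_nonneg' (x : Fin n → ℝ) : 0 ≤ x ⬝ᵥ x :=
  Finset.sum_nonneg fun _ _ => mul_self_nonneg _

lemma vnorm_eq_one {x : Fin n → ℝ} (h : vnorm x = 1) : x ⬝ᵥ x = 1 :=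
  Real.sqrt_eq_one.mp h

/-- The candidate minimal face of `P` at `u`. -/
def minF (P : Set (Fin n → ℝ)) (u : Fin n → ℝ) : Set (Fin n → ℝ) :=
  {x | x ∈ P ∧ ∃ μ : ℝ, 0 < μ ∧ u - μ • x ∈ P}

variable {P : Set (Fin n → ℝ)} {u : Fin n → ℝ}
variable (hadd : ∀ x ∈ P, ∀ y ∈ P, x + y ∈ P)
variable (hsmul : ∀ c : ℝ, 0 ≤ c → ∀ x ∈ P, c • x ∈ P)

include hadd hsmul

lemma minF_shrink' {x : Fin n → ℝ} {μ μ' : ℝ} (hx : x ∈ P) (hμ : u - μ • x ∈ P)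
    (h2 : μ' ≤ μ) : u - μ' • x ∈ P := by
  have : u - μ' • x = (u - μ • x) + (μ - μ') • x := by module
  rw [this]; exact hadd _ hμ _ (hsmul _ (by linarith) _ hx)

lemma mem_minF_self (hu : u ∈ P) : u ∈ minF P u := by
  refine ⟨hu, 1/2, by norm_num, ?_⟩
  have : u - (1/2 : ℝ) • u = (1/2 : ℝ) • u := by module
  rw [this]; exact hsmul _ (by norm_num) _ hu

lemma zero_mem_minF (hu : u ∈ P) : (0 : Fin n → ℝ) ∈ minF P u := by
  refine ⟨by simpa using hsmul 0 le_rfl u hu, 1, one_pos, by simpa using hu⟩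

lemma minF_add {x y : Fin n → ℝ} (hx : x ∈ minF P u) (hy : y ∈ minF P u) :
    x + y ∈ minF P u := by
  obtain ⟨hxP, lam, hlam, hxw⟩ := hx
  obtain ⟨hyP, mu, hmu, hyw⟩ := hy
  set nu := min lam mu with hnu
  have hnup : 0 < nu := lt_min hlam hmu
  have hx' : u - nu • x ∈ P := minF_shrink' hadd hsmul hxP hxw (min_le_left _ _)
  have hy' : u - nu • y ∈ P := minF_shrink' hadd hsmul hyP hyw (min_le_right _ _)
  refine ⟨hadd _ hxP _ hyP, nu / 2, by positivity, ?_⟩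
  have : u - (nu / 2) • (x + y) = (1/2 : ℝ) • (u - nu • x) + (1/2 : ℝ) • (u - nu • y) := by
    module
  rw [this]
  exact hadd _ (hsmul _ (by norm_num) _ hx') _ (hsmul _ (by norm_num) _ hy')

lemma minF_isFace (hu : u ∈ P) : IsFace P (minF P u) := by
  refine ⟨fun x hx => hx.1, ?_, ?_, ?_⟩
  · -- convex
    rintro x ⟨hxP, lam, hlam, hxw⟩ y ⟨hyP, mu, hmu, hyw⟩ a b ha hb hab
    set nu := min lam mu with hnu
    have hnup : 0 < nu := lt_min hlam hmu
    have hx' : u - nu • x ∈ P := minF_shrink' hadd hsmul hxP hxw (min_le_left _ _)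
    have hy' : u - nu • y ∈ P := minF_shrink' hadd hsmul hyP hyw (min_le_right _ _)
    refine ⟨hadd _ (hsmul _ ha _ hxP) _ (hsmul _ hb _ hyP), nu, hnup, ?_⟩
    obtain rfl : b = 1 - a := by linarith
    have : u - nu • (a • x + (1-a) • y) = a • (u - nu • x) + (1-a) • (u - nu • y) := by
      module
    rw [this]
    exact hadd _ (hsmul _ ha _ hx') _ (hsmul _ hb _ hy')
  · -- cone
    rintro c hc x ⟨hxP, mu, hmu, hxw⟩
    rcases eq_or_lt_of_le hc with rfl | hc'
    · refine ⟨by simpa using hsmul 0 le_rfl x hxP, 1, one_pos, by simpa using hu⟩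
    · refine ⟨hsmul _ hc _ hxP, mu / c, by positivity, ?_⟩
      have : (mu / c) • (c • x) = mu • x := by
        rw [smul_smul, div_mul_cancel₀ _ (ne_of_gt hc')]
      rw [this]; exact hxw
  · -- face
    rintro v₁ v₂ h1 h2 ⟨_, mu, hmu, hw⟩
    constructor
    · refine ⟨h1, mu, hmu, ?_⟩
      have : u - mu • v₁ = (u - mu • (v₁ + v₂)) + mu • v₂ := by module
      rw [this]; exact hadd _ hw _ (hsmul _ hmu.le _ h2)
    · refine ⟨h2, mu, hmu, ?_⟩
      have : u - mu • v₂ = (u - mu • (v₁ + v₂)) + mu • v₁ := by module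
      rw [this]; exact hadd _ hw _ (hsmul _ hmu.le _ h1)

end Aux


section A
variable {n : ℕ}

lemma span_sub {S : Set (Fin n → ℝ)} (h0 : (0 : Fin n → ℝ) ∈ S)
    (hadd : ∀ x ∈ S, ∀ y ∈ S, x + y ∈ S)
    (hsmul : ∀ c : ℝ, 0 ≤ c → ∀ x ∈ S, c • x ∈ S)
    {z : Fin n → ℝ} (hz : z ∈ Submodule.span ℝ S) :
    ∃ x ∈ S, ∃ y ∈ S, z = x - y := by
  let D : Submodule ℝ (Fin n → ℝ) :=
    { carrier := {w | ∃ x ∈ S, ∃ y ∈ S, w = x - y}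
      add_mem' := by
        rintro a b ⟨x, hx, y, hy, rfl⟩ ⟨x', hx', y', hy', rfl⟩
        exact ⟨x + x', hadd _ hx _ hx', y + y', hadd _ hy _ hy', by abel⟩
      zero_mem' := ⟨0, h0, 0, h0, by simp⟩
      smul_mem' := by
        rintro c a ⟨x, hx, y, hy, rfl⟩
        rcases le_total 0 c with hc | hc
        · exact ⟨c • x, hsmul _ hc _ hx, c • y, hsmul _ hc _ hy, by rw [smul_sub]⟩
        · refine ⟨(-c) • y, hsmul _ (by linarith) _ hy, (-c) • x, hsmul _ (by linarith) _ hx, ?_⟩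
          module }
  have hle : Submodule.span ℝ S ≤ D :=
    Submodule.span_le.2 fun x hx => ⟨x, hx, 0, h0, by simp⟩
  exact hle hz

lemma isFace_inter {P F G : Set (Fin n → ℝ)} (hF : IsFace P F) (hG : IsFace P G) :
    IsFace P (F ∩ G) := by
  obtain ⟨h1, h2, h3, h4⟩ := hF
  obtain ⟨g1, g2, g3, g4⟩ := hG
  refine ⟨fun x hx => h1 hx.1, h2.inter g2, fun c hc x hx => ⟨h3 c hc x hx.1, g3 c hc x hx.2⟩,
    fun v₁ v₂ hv1 hv2 hsum => ?_⟩
  obtain ⟨a1, a2⟩ := h4 v₁ v₂ hv1 hv2 hsum.1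
  obtain ⟨b1, b2⟩ := g4 v₁ v₂ hv1 hv2 hsum.2
  exact ⟨⟨a1, b1⟩, ⟨a2, b2⟩⟩

variable {P : Set (Fin n → ℝ)} {u : Fin n → ℝ}
variable (hadd : ∀ x ∈ P, ∀ y ∈ P, x + y ∈ P)
variable (hsmul : ∀ c : ℝ, 0 ≤ c → ∀ x ∈ P, c • x ∈ P)
include hadd hsmul

lemma seg_mem (hu : u ∈ P) {z : Fin n → ℝ} (hz : z ∈ Submodule.span ℝ (minF P u)) :
    ∃ t0 : ℝ, 0 < t0 ∧ ∀ t : ℝ, |t| ≤ t0 → u + t • z ∈ P := by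
  obtain ⟨x, hx, y, hy, rfl⟩ :=
    span_sub (zero_mem_minF hadd hsmul hu) (fun a ha b hb => minF_add hadd hsmul ha hb)
      (fun c hc a ha => ((minF_isFace hadd hsmul hu).2.2.1) c hc a ha) hz
  obtain ⟨hxP, lam, hlam, hxw⟩ := hx
  obtain ⟨hyP, mu, hmu, hyw⟩ := hy
  have step : ∀ (a b : Fin n → ℝ) (ν : ℝ), a ∈ P → 0 < ν → u - ν • b ∈ P →
      ∀ t : ℝ, 0 ≤ t → t ≤ ν → u + t • (a - b) ∈ P := by
    intro a b ν ha hν hb t ht1 ht2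
    have key : u + t • (a - b) = ((ν - t)/ν) • u + (t/ν) • (u - ν • b) + t • a := by
      match_scalars <;> field_simp <;> ring
    rw [key]
    refine hadd _ (hadd _ (hsmul _ (div_nonneg (by linarith) hν.le) _ hu) _
      (hsmul _ (div_nonneg ht1 hν.le) _ hb)) _ (hsmul _ ht1 _ ha)
  refine ⟨min lam mu, lt_min hlam hmu, fun t ht => ?_⟩
  rcases le_total 0 t with htp | htn
  · exact step x y mu hxP hmu hyw t htp
      (le_trans (le_trans (le_abs_self t) ht) (min_le_right _ _))
  · have h1 : u + t • (x - y) = u + (-t) • (y - x) := by module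
    rw [h1]
    refine step y x lam hyP hlam hxw (-t) (by linarith) ?_
    have : |t| = -t := abs_of_nonpos htn
    rw [this] at ht
    exact le_trans ht (min_le_left _ _)

lemma span_le_span_minF (hu : u ∈ P) {Fu : Set (Fin n → ℝ)} (hFu : IsFace P Fu) (huFu : u ∈ Fu)
    (hFumin : ∀ F, IsFace P F → u ∈ F → faceDim Fu ≤ faceDim F) :
    Submodule.span ℝ Fu ≤ Submodule.span ℝ (minF P u) := by
  have hF : IsFace P (minF P u) := minF_isFace hadd hsmul hu
  have hFF : IsFace P (Fu ∩ minF P u) := isFace_inter hFu hF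
  have hm : faceDim Fu ≤ faceDim (Fu ∩ minF P u) :=
    hFumin _ hFF ⟨huFu, mem_minF_self hadd hsmul hu⟩
  have hle : Submodule.span ℝ (Fu ∩ minF P u) ≤ Submodule.span ℝ Fu :=
    Submodule.span_mono Set.inter_subset_left
  have heq : Submodule.span ℝ (Fu ∩ minF P u) = Submodule.span ℝ Fu :=
    Submodule.eq_of_le_of_finrank_le hle hm
  rw [← heq]
  exact Submodule.span_mono Set.inter_subset_right

end A


section B
variable {n : ℕ}

set_option maxHeartbeats 1000000 in
lemma counterexample {P Q : Set (Fin n → ℝ)} {u v z : Fin n → ℝ}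
    (hPsmul : ∀ c : ℝ, 0 ≤ c → ∀ x ∈ P, c • x ∈ P)
    (hQsmul : ∀ c : ℝ, 0 ≤ c → ∀ x ∈ Q, c • x ∈ Q)
    {t0 : ℝ} (ht0 : 0 < t0)
    (hsegP : ∀ t : ℝ, |t| ≤ t0 → u + t • z ∈ P)
    (hsegQ : ∀ t : ℝ, |t| ≤ t0 → v + t • z ∈ Q)
    (huu : u ⬝ᵥ u = 1) (hvv : v ⬝ᵥ v = 1) (huz : u ⬝ᵥ z = 0) (hvz : v ⬝ᵥ z = 0)
    (hz : z ≠ 0) (hσ1 : -1 < u ⬝ᵥ v) (hσ2 : u ⬝ᵥ v < 1)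
    (sgn : ℝ) (hsgn : sgn = 1 ∨ sgn = -1) {ε : ℝ} (hε : 0 < ε) :
    ∃ u' ∈ P, ∃ v' ∈ Q, vnorm u' = 1 ∧ vnorm v' = 1 ∧ vnorm (u' - u) < ε ∧
      vnorm (v' - v) < ε ∧ 0 < sgn * (u' ⬝ᵥ v' - u ⬝ᵥ v) := by
  have hzu : z ⬝ᵥ u = 0 := by rw [dotProduct_comm]; exact huz
  have hzv : z ⬝ᵥ v = 0 := by rw [dotProduct_comm]; exact hvz
  have hsgn2 : sgn ^ 2 = 1 := by rcases hsgn with rfl | rfl <;> norm_num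
  have hb : 0 < z ⬝ᵥ z := by
    rcases lt_or_eq_of_le (dot_self_nonneg' z) with h | h
    · exact h
    · exact absurd (dotProduct_self_eq_zero.mp h.symm) hz
  set b := z ⬝ᵥ z with hbdef
  set t := min t0 (min 1 (ε ^ 2 / (4 * (b + 1)))) with htdef
  have htpos : 0 < t := lt_min ht0 (lt_min one_pos (by positivity))
  have ht1 : t ≤ 1 := le_trans (min_le_right _ _) (min_le_left _ _)
  have ht0' : t ≤ t0 := min_le_left _ _
  have htε : t ≤ ε ^ 2 / (4 * (b + 1)) := le_trans (min_le_right _ _) (min_le_right _ _)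
  set x := t ^ 2 * b with hxdef
  have hxpos : 0 < x := by positivity
  have hxb : x ≤ t * b := by nlinarith
  have hxε : 2 * x < ε ^ 2 := by
    have h1 : t * b ≤ ε ^ 2 / (4 * (b + 1)) * b := mul_le_mul_of_nonneg_right htε hb.le
    have h2 : ε ^ 2 / (4 * (b + 1)) * b < ε ^ 2 / 2 := by
      rw [div_mul_eq_mul_div, div_lt_iff₀ (by positivity)]
      nlinarith
    linarith
  set s := Real.sqrt (1 + x) with hsdef
  have hs1 : 1 ≤ s := Real.one_le_sqrt.mpr (by linarith)
  have hs2 : s ^ 2 = 1 + x := Real.sq_sqrt (by linarith)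
  have hspos : 0 < s := lt_of_lt_of_le one_pos hs1
  have hsle : s ≤ 1 + x := by nlinarith
  set c := s⁻¹ with hcdef
  have hcpos : 0 < c := inv_pos.mpr hspos
  have hcs : c * s = 1 := inv_mul_cancel₀ hspos.ne'
  have hc2 : c ^ 2 * (1 + x) = 1 := by
    rw [← hs2]; rw [hcdef]; field_simp
  have h1c : 1 - c ≤ x := by nlinarith
  -- memberships
  have habs : |sgn * t| = t := by
    rcases hsgn with rfl | rfl <;> simp [abs_of_pos htpos, abs_of_neg, htpos.le] <;>
      rw [abs_of_pos htpos]
  have hUP : u + t • z ∈ P := hsegP t (by rw [abs_of_pos htpos]; exact ht0')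
  have hVQ : v + (sgn * t) • z ∈ Q := hsegQ _ (by rw [habs]; exact ht0')
  -- dot product values
  have duu : (u + t • z) ⬝ᵥ (u + t • z) = 1 + x := by
    simp [dotProduct_add, add_dotProduct, dotProduct_smul, smul_dotProduct, huu, huz, hzu,
      smul_eq_mul, ← hbdef]
    rw [hxdef]; ring
  have dvv : (v + (sgn * t) • z) ⬝ᵥ (v + (sgn * t) • z) = 1 + x := by
    simp [dotProduct_add, add_dotProduct, dotProduct_smul, smul_dotProduct, hvv, hvz, hzv,
      smul_eq_mul, ← hbdef]
    rw [hxdef]; linear_combination (t ^ 2 * b) * hsgn2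
  have duv : (u + t • z) ⬝ᵥ (v + (sgn * t) • z) = u ⬝ᵥ v + sgn * x := by
    simp [dotProduct_add, add_dotProduct, dotProduct_smul, smul_dotProduct, huz, hzv, hzu, hvz,
      smul_eq_mul, ← hbdef]
    rw [hxdef]; ring
  have duX : (u + t • z) ⬝ᵥ u = 1 := by
    simp [add_dotProduct, smul_dotProduct, huu, hzu, smul_eq_mul]
  have dvX : (v + (sgn * t) • z) ⬝ᵥ v = 1 := by
    simp [add_dotProduct, smul_dotProduct, hvv, hzv, smul_eq_mul]
  refine ⟨c • (u + t • z), hPsmul c hcpos.le _ hUP, c • (v + (sgn * t) • z),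
    hQsmul c hcpos.le _ hVQ, ?_, ?_, ?_, ?_, ?_⟩
  · show Real.sqrt _ = 1
    rw [smul_dotProduct, dotProduct_smul, duu, smul_eq_mul, smul_eq_mul, ← mul_assoc,
      ← sq]
    rw [hc2, Real.sqrt_one]
  · show Real.sqrt _ = 1
    rw [smul_dotProduct, dotProduct_smul, dvv, smul_eq_mul, smul_eq_mul, ← mul_assoc, ← sq]
    rw [hc2, Real.sqrt_one]
  · show Real.sqrt _ < ε
    have e1 : (c • (u + t • z)) ⬝ᵥ (c • (u + t • z)) = c ^ 2 * (1 + x) := by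
      rw [smul_dotProduct, dotProduct_smul, duu, smul_eq_mul, smul_eq_mul]; ring
    have e2 : (c • (u + t • z)) ⬝ᵥ u = c := by
      rw [smul_dotProduct, duX, smul_eq_mul, mul_one]
    have e3 : u ⬝ᵥ (c • (u + t • z)) = c := by rw [dotProduct_comm]; exact e2
    have hd : (c • (u + t • z) - u) ⬝ᵥ (c • (u + t • z) - u) = 2 * (1 - c) := by
      rw [sub_dotProduct, dotProduct_sub, dotProduct_sub, e1, e2, e3, huu]
      linear_combination hc2
    rw [hd]
    refine (Real.sqrt_lt' hε).mpr (by linarith)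
  · show Real.sqrt _ < ε
    have e1 : (c • (v + (sgn * t) • z)) ⬝ᵥ (c • (v + (sgn * t) • z)) = c ^ 2 * (1 + x) := by
      rw [smul_dotProduct, dotProduct_smul, dvv, smul_eq_mul, smul_eq_mul]; ring
    have e2 : (c • (v + (sgn * t) • z)) ⬝ᵥ v = c := by
      rw [smul_dotProduct, dvX, smul_eq_mul, mul_one]
    have e3 : v ⬝ᵥ (c • (v + (sgn * t) • z)) = c := by rw [dotProduct_comm]; exact e2
    have hd : (c • (v + (sgn * t) • z) - v) ⬝ᵥ (c • (v + (sgn * t) • z) - v) = 2 * (1 - c) := by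
      rw [sub_dotProduct, dotProduct_sub, dotProduct_sub, e1, e2, e3, hvv]
      linear_combination hc2
    rw [hd]
    refine (Real.sqrt_lt' hε).mpr (by linarith)
  · have hdot : (c • (u + t • z)) ⬝ᵥ (c • (v + (sgn * t) • z)) = c ^ 2 * (u ⬝ᵥ v + sgn * x) := by
      rw [smul_dotProduct, dotProduct_smul, duv, smul_eq_mul, smul_eq_mul, ← mul_assoc, ← sq]
    rw [hdot]
    have key : sgn * (c ^ 2 * (u ⬝ᵥ v + sgn * x) - u ⬝ᵥ v)
        = c ^ 2 * x * (1 - sgn * (u ⬝ᵥ v)) := by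
      linear_combination (c ^ 2 * x) * hsgn2 + (sgn * (u ⬝ᵥ v)) * hc2
    rw [key]
    have hpos : 0 < 1 - sgn * (u ⬝ᵥ v) := by rcases hsgn with rfl | rfl <;> linarith
    exact mul_pos (mul_pos (pow_pos hcpos 2) hxpos) hpos
end B

set_option maxHeartbeats 1000000 in
/-- If `(u,v)` is a critical pair of `MA(P,Q)` for polyhedral cones `P, Q ⊆ ℝⁿ`, the
least-dimensional faces `F_u ∋ u`, `F_v ∋ v` satisfy `dim F_u + dim F_v > n`, and
`v ≠ ±u`, then `(u,v)` is a saddle point: neither a local minimizer nor a local maximizer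
of `⟨u,v⟩` on the feasible set. -/
theorem stmt7 {n : ℕ} (P Q : Set (Fin n → ℝ))
    (hP : ∃ (p : ℕ) (G : Matrix (Fin n) (Fin p) ℝ), P = coneOf G)
    (hQ : ∃ (q : ℕ) (H : Matrix (Fin n) (Fin q) ℝ), Q = coneOf H)
    (u v : Fin n → ℝ)
    (hu : u ∈ P) (hv : v ∈ Q) (hnu : vnorm u = 1) (hnv : vnorm v = 1)
    (hcrit1 : ∀ w ∈ P, 0 ≤ (v - (u ⬝ᵥ v) • u) ⬝ᵥ w)
    (hcrit2 : ∀ w ∈ Q, 0 ≤ (u - (u ⬝ᵥ v) • v) ⬝ᵥ w)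
    (hcrit3 : u ⬝ᵥ (v - (u ⬝ᵥ v) • u) = 0)
    (hcrit4 : v ⬝ᵥ (u - (u ⬝ᵥ v) • v) = 0)
    (Fu Fv : Set (Fin n → ℝ))
    (hFu : IsFace P Fu) (huFu : u ∈ Fu)
    (hFumin : ∀ F, IsFace P F → u ∈ F → faceDim Fu ≤ faceDim F)
    (hFv : IsFace Q Fv) (hvFv : v ∈ Fv)
    (hFvmin : ∀ F, IsFace Q F → v ∈ F → faceDim Fv ≤ faceDim F)
    (hdim : n < faceDim Fu + faceDim Fv)
    (hne1 : v ≠ u) (hne2 : v ≠ -u) :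
    (¬ ∃ ε > (0:ℝ), ∀ u' ∈ P, ∀ v' ∈ Q, vnorm u' = 1 → vnorm v' = 1 →
        vnorm (u' - u) < ε → vnorm (v' - v) < ε → u ⬝ᵥ v ≤ u' ⬝ᵥ v') ∧
    (¬ ∃ ε > (0:ℝ), ∀ u' ∈ P, ∀ v' ∈ Q, vnorm u' = 1 → vnorm v' = 1 →
        vnorm (u' - u) < ε → vnorm (v' - v) < ε → u' ⬝ᵥ v' ≤ u ⬝ᵥ v) := by
  -- cone closure properties
  have hPadd : ∀ x ∈ P, ∀ y ∈ P, x + y ∈ P := by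
    obtain ⟨p, G, rfl⟩ := hP
    rintro x ⟨a, ha, rfl⟩ y ⟨b, hb, rfl⟩
    exact ⟨a + b, fun i => add_nonneg (ha i) (hb i), by rw [Matrix.mulVec_add]⟩
  have hPsmul : ∀ c : ℝ, 0 ≤ c → ∀ x ∈ P, c • x ∈ P := by
    obtain ⟨p, G, rfl⟩ := hP
    rintro c hc x ⟨a, ha, rfl⟩
    exact ⟨c • a, fun i => mul_nonneg hc (ha i), by rw [Matrix.mulVec_smul]⟩
  have hQadd : ∀ x ∈ Q, ∀ y ∈ Q, x + y ∈ Q := by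
    obtain ⟨q, H, rfl⟩ := hQ
    rintro x ⟨a, ha, rfl⟩ y ⟨b, hb, rfl⟩
    exact ⟨a + b, fun i => add_nonneg (ha i) (hb i), by rw [Matrix.mulVec_add]⟩
  have hQsmul : ∀ c : ℝ, 0 ≤ c → ∀ x ∈ Q, c • x ∈ Q := by
    obtain ⟨q, H, rfl⟩ := hQ
    rintro c hc x ⟨a, ha, rfl⟩
    exact ⟨c • a, fun i => mul_nonneg hc (ha i), by rw [Matrix.mulVec_smul]⟩
  -- basic scalars
  have huu := vnorm_eq_one hnu
  have hvv := vnorm_eq_one hnv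
  have hvu : v ⬝ᵥ u = u ⬝ᵥ v := dotProduct_comm v u
  have hσ2 : u ⬝ᵥ v < 1 := by
    have h0 : (u - v) ⬝ᵥ (u - v) ≠ 0 := by
      intro h
      exact hne1 (sub_eq_zero.mp (dotProduct_self_eq_zero.mp h)).symm
    have h1 : 0 < (u - v) ⬝ᵥ (u - v) := (dot_self_nonneg' _).lt_of_ne (Ne.symm h0)
    have h2 : (u - v) ⬝ᵥ (u - v) = 2 - 2 * (u ⬝ᵥ v) := by
      rw [sub_dotProduct, dotProduct_sub, dotProduct_sub, huu, hvv, hvu]; ring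
    linarith [h2 ▸ h1]
  have hσ1 : -1 < u ⬝ᵥ v := by
    have h0 : (u + v) ⬝ᵥ (u + v) ≠ 0 := by
      intro h
      exact hne2 (eq_neg_of_add_eq_zero_right (dotProduct_self_eq_zero.mp h))
    have h1 : 0 < (u + v) ⬝ᵥ (u + v) := (dot_self_nonneg' _).lt_of_ne (Ne.symm h0)
    have h2 : (u + v) ⬝ᵥ (u + v) = 2 + 2 * (u ⬝ᵥ v) := by
      rw [add_dotProduct, dotProduct_add, dotProduct_add, huu, hvv, hvu]; ring
    linarith [h2 ▸ h1]
  -- find a common nonzero direction z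
  have hsup : Module.finrank ℝ ↥(Submodule.span ℝ Fu ⊔ Submodule.span ℝ Fv) ≤ n := by
    simpa using Submodule.finrank_le (Submodule.span ℝ Fu ⊔ Submodule.span ℝ Fv)
  have hdim' : n < Module.finrank ℝ ↥(Submodule.span ℝ Fu) +
      Module.finrank ℝ ↥(Submodule.span ℝ Fv) := hdim
  have hinfpos : 0 < Module.finrank ℝ ↥(Submodule.span ℝ Fu ⊓ Submodule.span ℝ Fv) := by
    have h := Submodule.finrank_sup_add_finrank_inf_eq (Submodule.span ℝ Fu)
      (Submodule.span ℝ Fv)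
    omega
  haveI : Nontrivial ↥(Submodule.span ℝ Fu ⊓ Submodule.span ℝ Fv) :=
    Module.nontrivial_of_finrank_pos hinfpos
  obtain ⟨z0, hz0ne⟩ := exists_ne (0 : ↥(Submodule.span ℝ Fu ⊓ Submodule.span ℝ Fv))
  set z : Fin n → ℝ := (z0 : Fin n → ℝ) with hzdef
  have hzne : z ≠ 0 := fun h => hz0ne (Subtype.ext h)
  have hzFu : z ∈ Submodule.span ℝ Fu := (Submodule.mem_inf.mp z0.2).1
  have hzFv : z ∈ Submodule.span ℝ Fv := (Submodule.mem_inf.mp z0.2).2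
  -- segments
  obtain ⟨t0u, ht0u, hsegu⟩ := seg_mem hPadd hPsmul hu
    (span_le_span_minF hPadd hPsmul hu hFu huFu hFumin hzFu)
  obtain ⟨t0v, ht0v, hsegv⟩ := seg_mem hQadd hQsmul hv
    (span_le_span_minF hQadd hQsmul hv hFv hvFv hFvmin hzFv)
  set t0 := min t0u t0v with ht0def
  have ht0 : 0 < t0 := lt_min ht0u ht0v
  have hsegP : ∀ t : ℝ, |t| ≤ t0 → u + t • z ∈ P :=
    fun t ht => hsegu t (le_trans ht (min_le_left _ _))
  have hsegQ : ∀ t : ℝ, |t| ≤ t0 → v + t • z ∈ Q :=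
    fun t ht => hsegv t (le_trans ht (min_le_right _ _))
  -- orthogonality
  have habs1 : |t0| ≤ t0 := by rw [abs_of_pos ht0]
  have habs2 : |(-t0)| ≤ t0 := by rw [abs_neg, abs_of_pos ht0]
  have hc3 : (v - (u ⬝ᵥ v) • u) ⬝ᵥ u = 0 := by rw [dotProduct_comm]; exact hcrit3
  have hc4 : (u - (u ⬝ᵥ v) • v) ⬝ᵥ v = 0 := by rw [dotProduct_comm]; exact hcrit4
  have hdz1 : (v - (u ⬝ᵥ v) • u) ⬝ᵥ z = 0 := by
    have hp := hcrit1 _ (hsegP t0 habs1)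
    have hm := hcrit1 _ (hsegP (-t0) habs2)
    rw [dotProduct_add, dotProduct_smul, hc3, smul_eq_mul, zero_add] at hp hm
    have h12 : t0 * ((v - (u ⬝ᵥ v) • u) ⬝ᵥ z) = 0 := le_antisymm (by linarith) hp
    exact (mul_eq_zero.mp h12).resolve_left (ne_of_gt ht0)
  have hdz2 : (u - (u ⬝ᵥ v) • v) ⬝ᵥ z = 0 := by
    have hp := hcrit2 _ (hsegQ t0 habs1)
    have hm := hcrit2 _ (hsegQ (-t0) habs2)
    rw [dotProduct_add, dotProduct_smul, hc4, smul_eq_mul, zero_add] at hp hm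
    have h12 : t0 * ((u - (u ⬝ᵥ v) • v) ⬝ᵥ z) = 0 := le_antisymm (by linarith) hp
    exact (mul_eq_zero.mp h12).resolve_left (ne_of_gt ht0)
  have e1 : v ⬝ᵥ z - (u ⬝ᵥ v) * (u ⬝ᵥ z) = 0 := by
    rw [sub_dotProduct, smul_dotProduct, smul_eq_mul] at hdz1; linarith
  have e2 : u ⬝ᵥ z - (u ⬝ᵥ v) * (v ⬝ᵥ z) = 0 := by
    rw [sub_dotProduct, smul_dotProduct, smul_eq_mul] at hdz2; linarith
  have h3 : (1 - (u ⬝ᵥ v) ^ 2) * (u ⬝ᵥ z) = 0 := by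
    linear_combination e2 + (u ⬝ᵥ v) * e1
  have h4 : 0 < 1 - (u ⬝ᵥ v) ^ 2 := by nlinarith
  have huz : u ⬝ᵥ z = 0 := (mul_eq_zero.mp h3).resolve_left (ne_of_gt h4)
  have hvz : v ⬝ᵥ z = 0 := by
    have := e1; rw [huz, mul_zero, sub_zero] at this; exact this
  -- conclude
  constructor
  · rintro ⟨ε, hε, h⟩
    obtain ⟨u', hu', v', hv', hn1, hn2, hd1, hd2, hlt⟩ :=
      counterexample hPsmul hQsmul ht0 hsegP hsegQ huu hvv huz hvz hzne hσ1 hσ2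
        (-1) (Or.inr rfl) hε
    have hle := h u' hu' v' hv' hn1 hn2 hd1 hd2
    linarith
  · rintro ⟨ε, hε, h⟩
    obtain ⟨u', hu', v', hv', hn1, hn2, hd1, hd2, hlt⟩ :=
      counterexample hPsmul hQsmul ht0 hsegP hsegQ huu hvv huz hvz hzne hσ1 hσ2
        1 (Or.inl rfl) hε
    have hle := h u' hu' v' hv' hn1 hn2 hd1 hd2
    linarith
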